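/- Let K ≥ 1 and 1 ≤ L ≤ K be integers, p ∈ (0,1], and P_1,…,P_K > 0. For each integer n ≥ 2 let b^{(n)} be a maximizer of H_n(b) = ∑_{i=1}^K P_i (1 − (1 − b_i p)^n) over D_L = {b ∈ [0,1]^K : ∑_{i=1}^K b_i = L}. Then for every i, b_i^{(n)} → L/K as n → ∞; i.e., with a large number of retransmissions it is asymptotically optimal to cache all files evenly. -/

import Mathlib

open Filter

/-- Any sequence of maximizers `b^{(n)}` of the policy-1 hit
probability `H_n` over `D_L = {b ∈ [0,1]^K : ∑ b i = L}` converges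
coordinatewise to the uniform cache `L/K` as `n → ∞`. -/
theorem maximizers_tendsto_uniform
    (K L : ℕ) (hK : 1 ≤ K) (hL1 : 1 ≤ L) (hLK : L ≤ K)
    (p : ℝ) (hp : p ∈ Set.Ioc (0 : ℝ) 1) (P : Fin K → ℝ) (hP : ∀ i, 0 < P i)
    (b : ℕ → Fin K → ℝ)
    (hmem : ∀ n : ℕ, 2 ≤ n → ∀ i, b n i ∈ Set.Icc (0 : ℝ) 1)
    (hsum : ∀ n : ℕ, 2 ≤ n → ∑ i, b n i = (L : ℝ))
    (hmax : ∀ n : ℕ, 2 ≤ n →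
      ∀ c : Fin K → ℝ, (∀ i, c i ∈ Set.Icc (0 : ℝ) 1) → ∑ i, c i = (L : ℝ) →
        ∑ i, P i * (1 - (1 - c i * p) ^ n) ≤ ∑ i, P i * (1 - (1 - b n i * p) ^ n)) :
    ∀ i, Filter.Tendsto (fun n => b n i) Filter.atTop (nhds ((L : ℝ) / K)) := by
  obtain ⟨hp0, hp1⟩ := hp
  have hK0 : (0:ℝ) < K := by exact_mod_cast hK
  have hL0 : (0:ℝ) < L := by exact_mod_cast hL1
  have hLK' : (L:ℝ) ≤ K := by exact_mod_cast hLK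
  have hne : (Finset.univ : Finset (Fin K)).Nonempty := ⟨⟨0, hK⟩, Finset.mem_univ _⟩
  set S : ℝ := ∑ j, P j with hSdef
  have hS : 0 < S := Finset.sum_pos (fun j _ => hP j) hne
  set Pm : ℝ := Finset.univ.inf' hne P with hPmdef
  have hPm : 0 < Pm := by
    rw [hPmdef, Finset.lt_inf'_iff]
    exact fun j _ => hP j
  have hPmle : ∀ j, Pm ≤ P j := fun j => Finset.inf'_le _ (Finset.mem_univ j)
  set A : ℝ := S / Pm with hAdef
  have hA0 : 0 < A := div_pos hS hPm
  set q : ℝ := 1 - (L:ℝ)/K * p with hqdef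
  have hLK1 : (L:ℝ)/K ≤ 1 := (div_le_one hK0).mpr hLK'
  have hq0 : 0 ≤ q := by
    have h : (L:ℝ)/K * p ≤ 1 := by
      calc (L:ℝ)/K * p ≤ 1 * 1 := by
            apply mul_le_mul hLK1 hp1 hp0.le zero_le_one
        _ = 1 := one_mul 1
    simp only [hqdef]; linarith
  -- nonnegativity of 1 - b n j * p
  have hx0 : ∀ n, 2 ≤ n → ∀ j, 0 ≤ 1 - b n j * p := by
    intro n hn j
    have h := hmem n hn j
    nlinarith [h.1, h.2]
  -- deficit bound via the uniform cache
  have hub : ∀ n, 2 ≤ n → ∑ j, P j * (1 - b n j * p) ^ n ≤ S * q ^ n := by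
    intro n hn
    have hcmem : ∀ j : Fin K, ((L:ℝ)/K) ∈ Set.Icc (0:ℝ) 1 := fun _ =>
      ⟨by positivity, hLK1⟩
    have hcsum : ∑ _j : Fin K, (L:ℝ)/K = (L:ℝ) := by
      rw [Finset.sum_const, Finset.card_univ, Fintype.card_fin, nsmul_eq_mul]
      field_simp
    have h := hmax n hn (fun _ => (L:ℝ)/K) hcmem hcsum
    simp only [mul_sub, mul_one, Finset.sum_sub_distrib] at h
    have hq' : ∑ j : Fin K, P j * (1 - (L:ℝ)/K * p) ^ n = S * q ^ n := by
      rw [hSdef, Finset.sum_mul]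
    linarith [h, hq'.symm.le, hq'.le]
  -- key per-coordinate bound
  have key : ∀ n, 2 ≤ n → ∀ j, 1 - b n j * p ≤ A ^ ((n:ℝ)⁻¹) * q := by
    intro n hn j
    have hn0 : n ≠ 0 := by omega
    have hxj := hx0 n hn j
    have hterm : P j * (1 - b n j * p) ^ n ≤ S * q ^ n := by
      refine le_trans ?_ (hub n hn)
      refine Finset.single_le_sum (f := fun k => P k * (1 - b n k * p) ^ n)
        (fun k _ => ?_) (Finset.mem_univ j)
      have hxk := hx0 n hn k
      have hPk := (hP k).le
      positivity
    have hxn : (1 - b n j * p) ^ n ≤ A * q ^ n := by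
      have h1 : (1 - b n j * p) ^ n ≤ (S / P j) * q ^ n := by
        rw [div_mul_eq_mul_div, le_div_iff₀ (hP j)]
        nlinarith [hterm]
      refine h1.trans (mul_le_mul_of_nonneg_right ?_ (by positivity))
      show S / P j ≤ S / Pm
      gcongr
      exact hPmle j
    have hy0 : 0 ≤ A ^ ((n:ℝ)⁻¹) * q := mul_nonneg (Real.rpow_nonneg hA0.le _) hq0
    refine le_of_pow_le_pow_left₀ hn0 hy0 ?_
    calc (1 - b n j * p) ^ n ≤ A * q ^ n := hxn
      _ = (A ^ ((n:ℝ)⁻¹) * q) ^ n := by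
          rw [mul_pow, ← Real.rpow_natCast (A ^ ((n:ℝ)⁻¹)) n, ← Real.rpow_mul hA0.le,
            inv_mul_cancel₀ (by exact_mod_cast hn0 : ((n:ℝ) ≠ 0)), Real.rpow_one]
  -- the error sequence tends to q
  have hεlim : Tendsto (fun n : ℕ => A ^ ((n:ℝ)⁻¹) * q) atTop (nhds q) := by
    have h0 : Tendsto (fun n : ℕ => ((n:ℝ))⁻¹) atTop (nhds 0) :=
      tendsto_inv_atTop_nhds_zero_nat
    have h1 : Tendsto (fun n : ℕ => A ^ ((n:ℝ)⁻¹)) atTop (nhds 1) := by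
      have heq : (fun n : ℕ => A ^ ((n:ℝ)⁻¹))
          = fun n : ℕ => Real.exp (Real.log A * (n:ℝ)⁻¹) := by
        funext n; rw [Real.rpow_def_of_pos hA0]
      rw [heq]
      have h2 : Tendsto (fun n : ℕ => Real.log A * (n:ℝ)⁻¹) atTop (nhds 0) := by
        have := (tendsto_const_nhds : Tendsto (fun _ : ℕ => Real.log A) atTop _).mul h0
        simpa using this
      have := (Real.continuous_exp.tendsto 0).comp h2
      simpa [Function.comp_def] using this
    have := h1.mul (tendsto_const_nhds : Tendsto (fun _ : ℕ => q) atTop _)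
    simpa using this
  -- lower bound function and its limit
  set g : ℕ → ℝ := fun n => (1 - A ^ ((n:ℝ)⁻¹) * q) / p with hgdef
  have hglim : Tendsto g atTop (nhds ((L:ℝ)/K)) := by
    have h1 : Tendsto (fun n : ℕ => (1 - A ^ ((n:ℝ)⁻¹) * q) / p) atTop
        (nhds ((1 - q) / p)) :=
      ((tendsto_const_nhds.sub hεlim)).div_const p
    have h2 : (1 - q) / p = (L:ℝ)/K := by
      rw [hqdef]; field_simp; ring
    rw [hgdef, ← h2]; exact h1
  -- lower eventual bound
  have hlow : ∀ n, 2 ≤ n → ∀ j, g n ≤ b n j := by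
    intro n hn j
    have hk := key n hn j
    rw [hgdef]
    rw [div_le_iff₀ hp0]
    nlinarith [hk]
  intro i
  -- upper eventual bound via the sum constraint
  have hupper : ∀ n, 2 ≤ n → b n i ≤ (L:ℝ) - ((K:ℝ) - 1) * g n := by
    intro n hn
    have herase : ∑ j ∈ Finset.univ.erase i, b n j = (L:ℝ) - b n i := by
      rw [Finset.sum_erase_eq_sub (Finset.mem_univ i), hsum n hn]
    have hcard : (Finset.univ.erase i).card = K - 1 := by
      simp [Finset.card_erase_of_mem, Fintype.card_fin]
    have hge : ((K - 1 : ℕ) : ℝ) * g n ≤ ∑ j ∈ Finset.univ.erase i, b n j := by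
      have := Finset.card_nsmul_le_sum (Finset.univ.erase i) (b n) (g n)
        (fun j _ => hlow n hn j)
      rw [hcard] at this
      simpa [nsmul_eq_mul] using this
    have hcast : ((K - 1 : ℕ) : ℝ) = (K:ℝ) - 1 := by
      rw [Nat.cast_sub hK]; norm_num
    rw [hcast] at hge
    linarith [herase, hge]
  have hulim : Tendsto (fun n => (L:ℝ) - ((K:ℝ) - 1) * g n) atTop (nhds ((L:ℝ)/K)) := by
    have h1 := (tendsto_const_nhds : Tendsto (fun _ : ℕ => (L:ℝ)) atTop _).sub
      ((tendsto_const_nhds : Tendsto (fun _ : ℕ => (K:ℝ) - 1) atTop _).mul hglim)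
    have h2 : (L:ℝ) - ((K:ℝ) - 1) * ((L:ℝ)/K) = (L:ℝ)/K := by
      field_simp; ring
    rw [← h2]; exact h1
  refine tendsto_of_tendsto_of_tendsto_of_le_of_le' hglim hulim ?_ ?_
  · filter_upwards [eventually_ge_atTop 2] with n hn
    exact hlow n hn i
  · filter_upwards [eventually_ge_atTop 2] with n hn
    exact hupper n hn
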